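/- With φ_N(x) = N^{-1/2} Σ_{|k| ≤ N} e^{ikx₁}e^{−ikx₂} on 𝕋² and S[φ_N](t) = φ_N for all t, one has ‖∫_0^T |S[φ_N](s)|² S[φ_N](s) ds‖_{H^s} = T·‖|φ_N|²φ_N‖_{H^s}, and there is a constant c > 0 (independent of N, T) with T·‖|φ_N|²φ_N‖_{H^s(𝕋²)} ≥ c·T·N^{1+s} for all N ≥ 1, 0 ≤ s. -/

import Mathlib

open Real MeasureTheory

/-- Fourier coefficient on `𝕋²` (functions on `ℝ²`, `2π`-periodic):
`f̂(ξ) = (2π)^{-2} ∫_{[0,2π]²} f(x) e^{-i(ξ₁x₁+ξ₂x₂)} dx`. -/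
noncomputable def fourierCoef2 (f : ℝ × ℝ → ℂ) (ξ : ℤ × ℤ) : ℂ :=
  (((2 * π) ^ 2)⁻¹ : ℝ) * ∫ x in Set.Icc ((0, 0) : ℝ × ℝ) (2 * π, 2 * π),
    f x * Complex.exp (-Complex.I * (((ξ.1 : ℝ) * x.1 + (ξ.2 : ℝ) * x.2 : ℝ) : ℂ))

/-- `H^s(𝕋²)` norm: `‖f‖_{H^s} = ((2π)² Σ_ξ (1+|ξ|²)^s |f̂(ξ)|²)^{1/2}`. -/
noncomputable def HsNorm2 (s : ℝ) (f : ℝ × ℝ → ℂ) : ℝ :=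
  Real.sqrt ((2 * π) ^ 2 *
    ∑' ξ : ℤ × ℤ, (1 + (ξ.1 : ℝ) ^ 2 + (ξ.2 : ℝ) ^ 2) ^ s * ‖fourierCoef2 f ξ‖ ^ 2)

/-- Wang's datum `φ_N(x) = N^{-1/2} Σ_{|k|≤N} e^{ikx₁}e^{-ikx₂}`. -/
noncomputable def phiN (N : ℕ) (x : ℝ × ℝ) : ℂ :=
  ((N : ℝ) ^ (-(1/2 : ℝ)) : ℝ) * ∑ k ∈ Finset.Icc (-(N : ℤ)) (N : ℤ),
    Complex.exp (Complex.I * (((k : ℝ) * x.1 - (k : ℝ) * x.2 : ℝ) : ℂ))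


noncomputable def E2 (p q : ℤ) (x : ℝ × ℝ) : ℂ :=
  Complex.exp (Complex.I * ((p : ℂ) * x.1 + (q : ℂ) * x.2))

def σ3 (t : ℤ × ℤ × ℤ) : ℤ := t.1 - t.2.1 + t.2.2

noncomputable def T3 (N : ℕ) : Finset (ℤ × ℤ × ℤ) :=
  (Finset.Icc (-(N:ℤ)) (N:ℤ)) ×ˢ (Finset.Icc (-(N:ℤ)) (N:ℤ)) ×ˢ (Finset.Icc (-(N:ℤ)) (N:ℤ))

noncomputable def cnt (N : ℕ) (ξ : ℤ × ℤ) : ℕ :=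
  ((T3 N).filter (fun t => ξ = (σ3 t, -σ3 t))).card

noncomputable def bigset (N : ℕ) : Finset (ℤ × ℤ) :=
  (Finset.Icc (-(3*N:ℤ)) (3*N:ℤ)).image (fun n => (n, -n))

lemma integral_exp_int (m : ℤ) :
    ∫ x in Set.Icc (0:ℝ) (2*π), Complex.exp (Complex.I * (m : ℂ) * x) =
      if m = 0 then ((2*π : ℝ) : ℂ) else 0 := by
  rw [integral_Icc_eq_integral_Ioc,
    ← intervalIntegral.integral_of_le (by positivity : (0:ℝ) ≤ 2*π)]
  by_cases hm : m = 0
  · simp [hm]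
  · rw [if_neg hm]
    have hc : (Complex.I * (m : ℂ)) ≠ 0 := by
      simp [Complex.I_ne_zero, hm]
    rw [integral_exp_mul_complex hc]
    have h1 : Complex.exp (Complex.I * (m:ℂ) * ((2*π : ℝ):ℂ)) = 1 := by
      rw [show Complex.I * (m:ℂ) * ((2*π : ℝ):ℂ) = (m:ℂ) * (2 * (π:ℂ) * Complex.I) by
        push_cast; ring]
      exact Complex.exp_int_mul_two_pi_mul_I m
    rw [show ((2*π:ℝ):ℂ) = 2*(π:ℂ) by push_cast; ring] at h1
    simp [h1]

lemma fourierCoef2_E2 (p q : ℤ) (ξ : ℤ × ℤ) :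
    fourierCoef2 (E2 p q) ξ = if ξ = (p, q) then 1 else 0 := by
  have key : ∀ x : ℝ × ℝ,
      E2 p q x * Complex.exp (-Complex.I * (((ξ.1 : ℝ) * x.1 + (ξ.2 : ℝ) * x.2 : ℝ) : ℂ))
        = Complex.exp (Complex.I * ((p - ξ.1 : ℤ) : ℂ) * x.1) *
          Complex.exp (Complex.I * ((q - ξ.2 : ℤ) : ℂ) * x.2) := by
    intro x
    rw [E2, ← Complex.exp_add, ← Complex.exp_add]
    congr 1
    push_cast
    ring
  rw [fourierCoef2]
  simp only [key]
  rw [show Set.Icc ((0, 0) : ℝ × ℝ) (2 * π, 2 * π)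
      = Set.Icc (0:ℝ) (2*π) ×ˢ Set.Icc (0:ℝ) (2*π) from Set.Icc_prod_eq _ _,
    Measure.volume_eq_prod,
    setIntegral_prod_mul (fun a : ℝ => Complex.exp (Complex.I * ((p - ξ.1 : ℤ) : ℂ) * (a:ℂ)))
      (fun a : ℝ => Complex.exp (Complex.I * ((q - ξ.2 : ℤ) : ℂ) * (a:ℂ))),
    integral_exp_int, integral_exp_int]
  have hπ : (π : ℝ) ≠ 0 := pi_ne_zero
  by_cases h1 : p - ξ.1 = 0 <;> by_cases h2 : q - ξ.2 = 0
  · have e : ξ = (p, q) := Prod.ext (by omega) (by omega)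
    rw [if_pos h1, if_pos h2, if_pos e,
      show ((2*π:ℝ):ℂ) * ((2*π:ℝ):ℂ) = (((2*π)^2 : ℝ):ℂ) by push_cast; ring,
      ← Complex.ofReal_mul, inv_mul_cancel₀ (by positivity)]
    norm_num
  · rw [if_pos h1, if_neg h2, if_neg (by intro h; rw [h] at h2; simp at h2), mul_zero, mul_zero]
  · rw [if_neg h1, if_pos h2, if_neg (by intro h; rw [h] at h1; simp at h1), zero_mul, mul_zero]
  · rw [if_neg h1, if_neg h2, if_neg (by intro h; rw [h] at h1; simp at h1), zero_mul, mul_zero]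

lemma E2_mul (a b c d : ℤ) (x : ℝ × ℝ) : E2 a b x * E2 c d x = E2 (a+c) (b+d) x := by
  unfold E2; rw [← Complex.exp_add]; congr 1; push_cast; ring

lemma conj_E2 (p q : ℤ) (x : ℝ × ℝ) :
    (starRingEnd ℂ) (E2 p q x) = E2 (-p) (-q) x := by
  unfold E2
  rw [← Complex.exp_conj]
  congr 1
  simp [map_add, map_mul, Complex.conj_I, Complex.conj_ofReal]
  push_cast
  ring

lemma phiN_eq (N : ℕ) (x : ℝ × ℝ) :
    phiN N x = (((N : ℝ) ^ (-(1/2 : ℝ)) : ℝ) : ℂ) *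
      ∑ k ∈ Finset.Icc (-(N : ℤ)) (N : ℤ), E2 k (-k) x := by
  unfold phiN E2
  congr 1
  apply Finset.sum_congr rfl
  intro k _
  congr 1
  push_cast
  ring

lemma cube_eq (N : ℕ) (x : ℝ × ℝ) :
    ((‖phiN N x‖ ^ 2 : ℝ) : ℂ) * phiN N x =
    ((((N:ℝ) ^ (-(1/2:ℝ)))^3 : ℝ) : ℂ) * ∑ t ∈ T3 N, E2 (σ3 t) (-(σ3 t)) x := by
  rw [show T3 N = (Finset.Icc (-(N:ℤ)) (N:ℤ)) ×ˢ (Finset.Icc (-(N:ℤ)) (N:ℤ)) ×ˢ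
    (Finset.Icc (-(N:ℤ)) (N:ℤ)) from rfl]
  have hz : ((‖phiN N x‖ ^ 2 : ℝ) : ℂ) = phiN N x * (starRingEnd ℂ) (phiN N x) := by
    rw [Complex.mul_conj, Complex.normSq_eq_norm_sq]
  rw [hz, phiN_eq]
  set c : ℝ := (N : ℝ) ^ (-(1/2 : ℝ))
  set I' := Finset.Icc (-(N:ℤ)) (N:ℤ)
  rw [map_mul, map_sum, Complex.conj_ofReal]
  simp only [conj_E2, neg_neg]
  simp only [Finset.sum_product]
  push_cast
  rw [show ((c:ℂ) * ∑ k ∈ I', E2 k (-k) x) * ((c:ℂ) * ∑ l ∈ I', E2 (-l) l x) *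
        ((c:ℂ) * ∑ m ∈ I', E2 m (-m) x)
      = (c:ℂ)^3 * (((∑ k ∈ I', E2 k (-k) x) * ∑ l ∈ I', E2 (-l) l x) * ∑ m ∈ I', E2 m (-m) x)
      by ring]
  congr 1
  rw [Finset.sum_mul_sum, Finset.sum_mul]
  apply Finset.sum_congr rfl
  intro k _
  rw [Finset.sum_mul]
  apply Finset.sum_congr rfl
  intro l _
  rw [Finset.mul_sum]
  apply Finset.sum_congr rfl
  intro m _
  rw [E2_mul, E2_mul]
  unfold σ3
  congr 1 <;> ring

lemma coef_cube (N : ℕ) (ξ : ℤ × ℤ) :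
    fourierCoef2 (fun x => ((‖phiN N x‖ ^ 2 : ℝ) : ℂ) * phiN N x) ξ
      = ((((N:ℝ) ^ (-(1/2:ℝ)))^3 : ℝ) : ℂ) * (cnt N ξ : ℂ) := by
  have hcont : ∀ (p q : ℤ), Continuous (fun x : ℝ×ℝ => E2 p q x *
      Complex.exp (-Complex.I * (((ξ.1 : ℝ) * x.1 + (ξ.2 : ℝ) * x.2 : ℝ) : ℂ))) := by
    intro p q
    unfold E2
    fun_prop
  unfold fourierCoef2
  have h1 : ∀ x : ℝ×ℝ, ((‖phiN N x‖^2:ℝ):ℂ) * phiN N x *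
      Complex.exp (-Complex.I * (((ξ.1 : ℝ) * x.1 + (ξ.2 : ℝ) * x.2 : ℝ) : ℂ))
      = ((((N:ℝ) ^ (-(1/2:ℝ)))^3 : ℝ) : ℂ) * ∑ t ∈ T3 N, (E2 (σ3 t) (-(σ3 t)) x *
          Complex.exp (-Complex.I * (((ξ.1 : ℝ) * x.1 + (ξ.2 : ℝ) * x.2 : ℝ) : ℂ))) := by
    intro x
    rw [cube_eq, mul_assoc, Finset.sum_mul]
  simp only [h1]
  rw [integral_const_mul, integral_finset_sum _
    (fun t _ => (hcont (σ3 t) (-(σ3 t))).integrableOn_Icc)]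
  have hswap : ((((2*π:ℝ)^2)⁻¹:ℝ):ℂ) * (((((N:ℝ) ^ (-(1/2:ℝ)))^3 : ℝ) : ℂ) *
      (∑ t ∈ T3 N, ∫ x in Set.Icc ((0, 0) : ℝ × ℝ) (2 * π, 2 * π),
        E2 (σ3 t) (-(σ3 t)) x *
          Complex.exp (-Complex.I * (((ξ.1 : ℝ) * x.1 + (ξ.2 : ℝ) * x.2 : ℝ) : ℂ))))
      = ((((N:ℝ) ^ (-(1/2:ℝ)))^3 : ℝ) : ℂ) *
      (∑ t ∈ T3 N, ((((2*π:ℝ)^2)⁻¹:ℝ):ℂ) * ∫ x in Set.Icc ((0, 0) : ℝ × ℝ) (2 * π, 2 * π),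
        E2 (σ3 t) (-(σ3 t)) x *
          Complex.exp (-Complex.I * (((ξ.1 : ℝ) * x.1 + (ξ.2 : ℝ) * x.2 : ℝ) : ℂ)))
      := by rw [Finset.mul_sum, Finset.mul_sum, Finset.mul_sum]; apply Finset.sum_congr rfl; intros; ring
  rw [hswap]
  congr 1
  have h2 : ∀ t ∈ T3 N, ((((2*π:ℝ)^2)⁻¹:ℝ):ℂ) * ∫ x in Set.Icc ((0, 0) : ℝ × ℝ) (2 * π, 2 * π),
      (E2 (σ3 t) (-(σ3 t)) x *
        Complex.exp (-Complex.I * (((ξ.1 : ℝ) * x.1 + (ξ.2 : ℝ) * x.2 : ℝ) : ℂ)))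
      = if ξ = (σ3 t, -σ3 t) then (1:ℂ) else 0 :=
    fun t _ => fourierCoef2_E2 (σ3 t) (-(σ3 t)) ξ
  rw [Finset.sum_congr rfl h2, Finset.sum_boole]
  rfl

lemma cnt_ge (N : ℕ) (n : ℤ) (h0 : 0 ≤ n) (hn : n ≤ (N:ℤ)) :
    (n+1).toNat * ((N:ℤ)+1).toNat ≤ cnt N (n, -n) := by
  unfold cnt
  have key := Finset.card_le_card_of_injOn
    (s := (Finset.Icc (0:ℤ) n) ×ˢ (Finset.Icc (-(N:ℤ)) 0))
    (t := (T3 N).filter (fun t => ((n, -n) : ℤ×ℤ) = (σ3 t, -σ3 t)))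
    (fun p : ℤ×ℤ => (p.1, p.2, n - p.1 + p.2))
    (by
      rintro ⟨k, l⟩ hp
      dsimp only
      rw [Finset.mem_coe, Finset.mem_product, Finset.mem_Icc, Finset.mem_Icc] at hp
      rw [Finset.mem_coe, Finset.mem_filter]
      constructor
      · unfold T3
        rw [Finset.mem_product, Finset.mem_product]
        simp only [Prod.fst, Prod.snd]
        refine ⟨?_, ?_, ?_⟩ <;> rw [Finset.mem_Icc] <;> omega
      · unfold σ3
        simp only [Prod.mk.injEq, Prod.fst, Prod.snd]
        omega)
    (by
      rintro ⟨k, l⟩ _ ⟨k', l'⟩ _ h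
      simp only [Prod.mk.injEq] at h
      simp [h.1, h.2.1])
  rwa [Finset.card_product, Int.card_Icc, Int.card_Icc, sub_zero,
    show (0:ℤ) + 1 - (-(N:ℤ)) = (N:ℤ) + 1 by ring] at key


lemma cnt_zero (N : ℕ) (ξ : ℤ × ℤ) (hξ : ξ ∉ bigset N) : cnt N ξ = 0 := by
  unfold cnt
  rw [Finset.card_eq_zero, Finset.filter_eq_empty_iff]
  intro t ht h
  apply hξ
  unfold T3 at ht
  rw [Finset.mem_product, Finset.mem_product, Finset.mem_Icc, Finset.mem_Icc,
    Finset.mem_Icc] at ht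
  unfold bigset
  rw [Finset.mem_image]
  refine ⟨σ3 t, ?_, ?_⟩
  · rw [Finset.mem_Icc]; unfold σ3; omega
  · rw [h]

lemma fourierCoef2_smul (T : ℝ) (f : ℝ × ℝ → ℂ) (ξ : ℤ × ℤ) :
    fourierCoef2 (fun x => (T : ℂ) * f x) ξ = (T : ℂ) * fourierCoef2 f ξ := by
  unfold fourierCoef2
  rw [show ∀ g : (ℝ×ℝ) → ℂ, (∫ x in Set.Icc ((0, 0) : ℝ × ℝ) (2 * π, 2 * π),
      (T:ℂ) * f x * Complex.exp (-Complex.I * (((ξ.1 : ℝ) * x.1 + (ξ.2 : ℝ) * x.2 : ℝ) : ℂ)))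
      = (T:ℂ) * ∫ x in Set.Icc ((0, 0) : ℝ × ℝ) (2 * π, 2 * π),
      f x * Complex.exp (-Complex.I * (((ξ.1 : ℝ) * x.1 + (ξ.2 : ℝ) * x.2 : ℝ) : ℂ))
      from fun _ => by rw [← integral_const_mul]; simp only [mul_assoc]]
  · ring
  · exact f

lemma HsNorm2_smul (T s : ℝ) (hT : 0 ≤ T) (f : ℝ × ℝ → ℂ) :
    HsNorm2 s (fun x => (T : ℂ) * f x) = T * HsNorm2 s f := by
  unfold HsNorm2
  have h1 : ∀ ξ : ℤ × ℤ, (1 + (ξ.1 : ℝ) ^ 2 + (ξ.2 : ℝ) ^ 2) ^ s *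
      ‖fourierCoef2 (fun x => (T : ℂ) * f x) ξ‖ ^ 2
      = T^2 * ((1 + (ξ.1 : ℝ) ^ 2 + (ξ.2 : ℝ) ^ 2) ^ s * ‖fourierCoef2 f ξ‖ ^ 2) := by
    intro ξ
    rw [fourierCoef2_smul, norm_mul, Complex.norm_real, Real.norm_eq_abs, abs_of_nonneg hT]
    ring
  rw [tsum_congr h1, tsum_mul_left, show (2*π)^2 * (T^2 * ∑' ξ : ℤ×ℤ,
      (1 + (ξ.1 : ℝ) ^ 2 + (ξ.2 : ℝ) ^ 2) ^ s * ‖fourierCoef2 f ξ‖ ^ 2)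
      = T^2 * ((2*π)^2 * ∑' ξ : ℤ×ℤ,
      (1 + (ξ.1 : ℝ) ^ 2 + (ξ.2 : ℝ) ^ 2) ^ s * ‖fourierCoef2 f ξ‖ ^ 2) by ring,
    Real.sqrt_mul (sq_nonneg T), Real.sqrt_sq hT]

lemma hs_lb (N : ℕ) (s : ℝ) (hN : 1 ≤ N) (hs : 0 ≤ s) :
    (N:ℝ) ^ (1+s) ≤ HsNorm2 s (fun x => ((‖phiN N x‖ ^ 2 : ℝ) : ℂ) * phiN N x) := by
  have hN0 : (0:ℝ) < N := by exact_mod_cast Nat.pos_of_ne_zero (by omega)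
  set c3 : ℝ := ((N:ℝ) ^ (-(1/2:ℝ)))^3 with hc3
  have hc30 : 0 ≤ c3 := by positivity
  set g : ℤ × ℤ → ℝ := fun ξ => (1 + (ξ.1 : ℝ) ^ 2 + (ξ.2 : ℝ) ^ 2) ^ s *
    ‖fourierCoef2 (fun x => ((‖phiN N x‖ ^ 2 : ℝ) : ℂ) * phiN N x) ξ‖ ^ 2 with hg
  have hnorm : ∀ ξ : ℤ × ℤ, ‖fourierCoef2
      (fun x => ((‖phiN N x‖ ^ 2 : ℝ) : ℂ) * phiN N x) ξ‖ = c3 * (cnt N ξ) := by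
    intro ξ
    rw [coef_cube, norm_mul, Complex.norm_real, Complex.norm_natCast,
      Real.norm_eq_abs, abs_of_nonneg hc30]
  have hg0 : ∀ ξ : ℤ × ℤ, 0 ≤ g ξ := by
    intro ξ
    apply mul_nonneg (Real.rpow_nonneg (by positivity) s) (sq_nonneg _)
  have hsupp : ∀ ξ : ℤ × ℤ, ξ ∉ bigset N → g ξ = 0 := by
    intro ξ hξ
    rw [hg]
    simp only [hnorm, cnt_zero N ξ hξ]
    norm_num
  have hsum : Summable g := summable_of_ne_finset_zero hsupp
  -- per-term lower bound
  have hterm : ∀ n ∈ Finset.Icc ((N:ℤ) - (N/8 : ℕ)) (N:ℤ),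
      ((N:ℝ)^2) ^ s * ((N:ℝ)/4) ≤ g (n, -n) := by
    intro n hn
    rw [Finset.mem_Icc] at hn
    have h8 : ((N/8 : ℕ) : ℝ) ≤ (N:ℝ)/8 := Nat.cast_div_le
    have hn0 : (0:ℤ) ≤ n := by
      have : (N/8 : ℕ) ≤ N := Nat.div_le_self N 8
      omega
    have hnr : (7:ℝ)/8 * N ≤ (n:ℝ) := by
      have h1 : ((N:ℤ) - (N/8 : ℕ) : ℤ) ≤ n := hn.1
      have h2 : ((N:ℝ) - ((N/8:ℕ):ℝ)) ≤ (n:ℝ) := by exact_mod_cast h1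
      linarith
    have hnN : (n:ℝ) ≤ (N:ℝ) := by exact_mod_cast hn.2
    rw [hg]
    simp only [hnorm]
    have hA : ((N:ℝ)^2) ^ s ≤ (1 + ((n:ℤ):ℝ)^2 + ((-n:ℤ):ℝ)^2) ^ s := by
      apply Real.rpow_le_rpow (by positivity) ?_ hs
      push_cast
      nlinarith
    have hcnt : (N:ℝ)^2 / 2 ≤ (cnt N (n, -n) : ℝ) := by
      have h1 := cnt_ge N n hn0 hn.2
      have h2 : (((n+1).toNat * ((N:ℤ)+1).toNat : ℕ) : ℝ) ≤ (cnt N (n, -n) : ℝ) := by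
        exact_mod_cast h1
      have e1 : (((n+1).toNat : ℕ) : ℝ) = (n:ℝ) + 1 := by
        have := Int.toNat_of_nonneg (by omega : (0:ℤ) ≤ n + 1)
        exact_mod_cast congrArg (Int.cast : ℤ → ℝ) this
      have e2 : ((((N:ℤ)+1).toNat : ℕ) : ℝ) = (N:ℝ) + 1 := by
        have := Int.toNat_of_nonneg (by omega : (0:ℤ) ≤ (N:ℤ) + 1)
        exact_mod_cast congrArg (Int.cast : ℤ → ℝ) this
      rw [Nat.cast_mul, e1, e2] at h2
      nlinarith
    have hc3sq : c3 ^ 2 = ((N:ℝ)^3)⁻¹ := by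
      rw [hc3, ← pow_mul, ← Real.rpow_natCast ((N:ℝ) ^ (-(1/2:ℝ))) 6,
        ← Real.rpow_mul (le_of_lt hN0),
        show (-(1/2:ℝ)) * ((6:ℕ):ℝ) = -(3:ℝ) by norm_num,
        Real.rpow_neg (le_of_lt hN0),
        show (3:ℝ) = ((3:ℕ):ℝ) by norm_num, Real.rpow_natCast]
    have key : ((N:ℝ)^2) ^ s * ((N:ℝ)/4)
        ≤ (1 + ((n:ℤ):ℝ)^2 + ((-n:ℤ):ℝ)^2) ^ s * (c3 * (cnt N (n,-n) : ℝ))^2 := by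
      have hrhs : (c3 * (cnt N (n,-n) : ℝ))^2 = c3^2 * (cnt N (n,-n) : ℝ)^2 := by ring
      rw [hrhs, hc3sq]
      have h4 : (N:ℝ)/4 ≤ ((N:ℝ)^3)⁻¹ * (cnt N (n,-n) : ℝ)^2 := by
        have : ((N:ℝ)^2/2)^2 ≤ (cnt N (n,-n) : ℝ)^2 := by
          apply sq_le_sq' (by nlinarith) hcnt
        calc (N:ℝ)/4 = ((N:ℝ)^3)⁻¹ * ((N:ℝ)^2/2)^2 := by field_simp; ring
          _ ≤ ((N:ℝ)^3)⁻¹ * (cnt N (n,-n) : ℝ)^2 := by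
              apply mul_le_mul_of_nonneg_left this (by positivity)
      calc ((N:ℝ)^2) ^ s * ((N:ℝ)/4)
          ≤ ((N:ℝ)^2) ^ s * (((N:ℝ)^3)⁻¹ * (cnt N (n,-n) : ℝ)^2) := by
            apply mul_le_mul_of_nonneg_left h4 (Real.rpow_nonneg (by positivity) s)
        _ ≤ (1 + ((n:ℤ):ℝ)^2 + ((-n:ℤ):ℝ)^2) ^ s * (((N:ℝ)^3)⁻¹ * (cnt N (n,-n) : ℝ)^2) := by
            apply mul_le_mul_of_nonneg_right hA (by positivity)
      -- done
    exact key
  -- sum over the chosen frequencies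
  set small : Finset (ℤ × ℤ) :=
    (Finset.Icc ((N:ℤ) - (N/8 : ℕ)) (N:ℤ)).image (fun n => (n, -n)) with hsmall
  have himg : ∑ ξ ∈ small, g ξ = ∑ n ∈ Finset.Icc ((N:ℤ) - (N/8 : ℕ)) (N:ℤ), g (n, -n) :=
    Finset.sum_image (fun x _ y _ h => by simpa [Prod.ext_iff] using h)
  have hcard : (Finset.Icc ((N:ℤ) - (N/8 : ℕ)) (N:ℤ)).card = N/8 + 1 := by
    rw [Int.card_Icc]; omega
  have hns := Finset.card_nsmul_le_sum (Finset.Icc ((N:ℤ) - (N/8 : ℕ)) (N:ℤ))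
    (fun n => g (n, -n)) (((N:ℝ)^2) ^ s * ((N:ℝ)/4)) hterm
  rw [hcard, nsmul_eq_mul] at hns
  have hle1 : ∑ ξ ∈ small, g ξ ≤ ∑' ξ, g ξ := Summable.sum_le_tsum small (fun ξ _ => hg0 ξ) hsum
  have hcardR : (N:ℝ)/8 ≤ ((N/8 + 1 : ℕ) : ℝ) := by
    have h9 : N < 8 * (N/8 + 1) := by omega
    have : (N:ℝ) < 8 * ((N/8 + 1 : ℕ) : ℝ) := by exact_mod_cast h9
    linarith
  have ht : ((N:ℝ)^2)^s * ((N:ℝ)^2/32) ≤ ∑' ξ, g ξ := by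
    have hb0 : (0:ℝ) ≤ ((N:ℝ)^2) ^ s * ((N:ℝ)/4) := by positivity
    have h1 : (N:ℝ)/8 * (((N:ℝ)^2) ^ s * ((N:ℝ)/4)) ≤
        ((N/8 + 1 : ℕ) : ℝ) * (((N:ℝ)^2) ^ s * ((N:ℝ)/4)) :=
      mul_le_mul_of_nonneg_right hcardR hb0
    have h2 : ((N:ℝ)^2)^s * ((N:ℝ)^2/32) = (N:ℝ)/8 * (((N:ℝ)^2) ^ s * ((N:ℝ)/4)) := by ring
    rw [h2]
    calc (N:ℝ)/8 * (((N:ℝ)^2) ^ s * ((N:ℝ)/4))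
        ≤ ((N/8 + 1 : ℕ) : ℝ) * (((N:ℝ)^2) ^ s * ((N:ℝ)/4)) := h1
      _ ≤ ∑ n ∈ Finset.Icc ((N:ℤ) - (N/8 : ℕ)) (N:ℤ), g (n, -n) := hns
      _ = ∑ ξ ∈ small, g ξ := himg.symm
      _ ≤ ∑' ξ, g ξ := hle1
  -- conclude via sqrt
  unfold HsNorm2
  have htsum0 : 0 ≤ ∑' ξ, g ξ := tsum_nonneg hg0
  rw [show (∑' ξ : ℤ × ℤ, (1 + (ξ.1 : ℝ) ^ 2 + (ξ.2 : ℝ) ^ 2) ^ s *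
      ‖fourierCoef2 (fun x => ((‖phiN N x‖ ^ 2 : ℝ) : ℂ) * phiN N x) ξ‖ ^ 2) = ∑' ξ, g ξ from rfl]
  rw [Real.le_sqrt (Real.rpow_nonneg hN0.le _) (by positivity)]
  have hpow : ((N:ℝ)^(1+s))^2 = ((N:ℝ)^2)^s * (N:ℝ)^2 := by
    calc ((N:ℝ)^(1+s))^2 = (N:ℝ)^((1+s)*((2:ℕ):ℝ)) := by
          rw [Real.rpow_mul hN0.le, Real.rpow_natCast]
      _ = (N:ℝ)^(2*s) * (N:ℝ)^(((2:ℕ):ℝ)) := by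
          rw [← Real.rpow_add hN0]; congr 1; push_cast; ring
      _ = ((N:ℝ)^2)^s * (N:ℝ)^2 := by
          rw [Real.rpow_natCast]
          congr 1
          rw [show (2:ℝ)*s = ((2:ℕ):ℝ)*s from by push_cast; ring,
            Real.rpow_mul hN0.le, Real.rpow_natCast]
  rw [hpow]
  have hpi : (8:ℝ) ≤ π^2 := by nlinarith [Real.pi_gt_three]
  have hAB : (0:ℝ) ≤ ((N:ℝ)^2)^s * ((N:ℝ)^2/32) := by positivity
  calc ((N:ℝ)^2)^s * (N:ℝ)^2 = 32 * (((N:ℝ)^2)^s * ((N:ℝ)^2/32)) := by ring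
    _ ≤ (2*π)^2 * (((N:ℝ)^2)^s * ((N:ℝ)^2/32)) := by nlinarith [hAB, hpi]
    _ ≤ (2*π)^2 * ∑' ξ, g ξ := by
        apply mul_le_mul_of_nonneg_left ht (by positivity)

/-- Since `S[φ_N](s) = φ_N`, one has
`‖∫_0^T |S[φ_N](s)|² S[φ_N](s) ds‖_{H^s} = T‖|φ_N|²φ_N‖_{H^s}`, and there is `c > 0`
(independent of `N`, `T`) with `T‖|φ_N|²φ_N‖_{H^s(𝕋²)} ≥ c·T·N^{1+s}` for `N ≥ 1`, `s ≥ 0`. -/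
theorem first_picard_iterate_lower_bound :
    ∃ c > (0 : ℝ), ∀ (N : ℕ) (T s : ℝ), 1 ≤ N → 0 ≤ T → 0 ≤ s →
      (HsNorm2 s (fun x => ∫ _τ in (0:ℝ)..T, ((‖phiN N x‖ ^ 2 : ℝ) : ℂ) * phiN N x)
          = T * HsNorm2 s (fun x => ((‖phiN N x‖ ^ 2 : ℝ) : ℂ) * phiN N x)) ∧
      c * T * (N : ℝ) ^ (1 + s)
        ≤ T * HsNorm2 s (fun x => ((‖phiN N x‖ ^ 2 : ℝ) : ℂ) * phiN N x) := by
  refine ⟨1, one_pos, fun N T s hN hT hs => ?_⟩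
  have heq : (fun x : ℝ × ℝ => ∫ _τ in (0:ℝ)..T, ((‖phiN N x‖ ^ 2 : ℝ) : ℂ) * phiN N x)
      = fun x => (T:ℂ) * (((‖phiN N x‖ ^ 2 : ℝ) : ℂ) * phiN N x) := by
    funext x
    rw [intervalIntegral.integral_const, sub_zero, Complex.real_smul]
  constructor
  · rw [heq, HsNorm2_smul T s hT]
  · rw [one_mul]
    exact mul_le_mul_of_nonneg_left (hs_lb N s hN hs) hT
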